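/- Let a¹, …, a^I be nonzero vectors in ℝ^J, b ∈ ℝ^I, and suppose the set C = { x ∈ ℝ^J : ⟨aⁱ, x⟩ = b_i for i = 1, …, I, and 0 ≤ x_j ≤ 1 for all j } is nonempty. Define A_C = Q ∘ U_I ∘ ⋯ ∘ U_1, where U_i(x) = x + ((b_i − ⟨aⁱ, x⟩)/‖aⁱ‖²) aⁱ and Q is componentwise clipping to [0,1]. Then for every x⁰ ∈ [0,1]^J, the sequence x^{k+1} = A_C(x^k) converges to a point x* ∈ C. -/

import Mathlib

open scoped RealInnerProductSpace
set_option maxHeartbeats 1000000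

namespace ArtAux

/-- iterate a family of maps -/
def pgen {α : Type*} (u : ℕ → α → α) : ℕ → α → α
  | 0, x => x
  | n+1, x => u n (pgen u n x)

lemma pgen_congr {α : Type*} {u v : ℕ → α → α} {n : ℕ}
    (h : ∀ m < n, u m = v m) (x : α) : pgen u n x = pgen v n x := by
  induction n with
  | zero => rfl
  | succ n ih =>
    have h1 : u n = v n := h n (Nat.lt_succ_self n)
    have h2 := ih (fun m hm => h m (hm.trans (Nat.lt_succ_self n)))
    simp only [pgen, h1, h2]

lemma foldl_eq_pgen {α : Type*} (n : ℕ) (f : α → Fin n → α) (x : α) :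
    Fin.foldl n f x = pgen (fun m y => if h : m < n then f y ⟨m, h⟩ else y) n x := by
  induction n with
  | zero => rw [Fin.foldl_zero]; rfl
  | succ n ih =>
    rw [Fin.foldl_succ_last, ih]
    show _ = (fun m y => if h : m < n + 1 then f y ⟨m, h⟩ else y) n
      (pgen (fun m y => if h : m < n + 1 then f y ⟨m, h⟩ else y) n x)
    have hc : pgen (fun m y => if h : m < n then f y (⟨m, h⟩ : Fin n).castSucc else y) n x
        = pgen (fun m y => if h : m < n + 1 then f y ⟨m, h⟩ else y) n x := by
      apply pgen_congr
      intro m hm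
      funext y
      rw [dif_pos hm, dif_pos (hm.trans (Nat.lt_succ_self n))]
      congr 1
    rw [hc]
    simp only [dif_pos (Nat.lt_succ_self n)]
    rfl

variable {J : ℕ}

lemma hyper_mem (a : EuclideanSpace ℝ (Fin J)) (ha : a ≠ 0) (b : ℝ)
    (y : EuclideanSpace ℝ (Fin J)) :
    ⟪a, y + ((b - ⟪a, y⟫) / ‖a‖ ^ 2) • a⟫ = b := by
  have h : ‖a‖ ≠ 0 := norm_ne_zero_iff.mpr ha
  rw [inner_add_right, real_inner_smul_right, real_inner_self_eq_norm_sq]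
  field_simp
  ring

lemma hyper_step (a : EuclideanSpace ℝ (Fin J)) (b t : ℝ)
    (c y : EuclideanSpace ℝ (Fin J)) (hc : ⟪a, c⟫ = b)
    (hy : ⟪a, y + t • a⟫ = b) :
    ‖y + t • a - c‖ ^ 2 + ‖t • a‖ ^ 2 = ‖y - c‖ ^ 2 := by
  have horth : ⟪t • a, y + t • a - c⟫ = 0 := by
    rw [real_inner_smul_left, inner_sub_right, hy, hc]; ring
  have hdecomp : y - c = (y + t • a - c) + (-(t • a)) := by abel
  rw [hdecomp, norm_add_sq_real, inner_neg_right, norm_neg]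
  have : ⟪y + t • a - c, t • a⟫ = 0 := by rw [real_inner_comm]; exact horth
  rw [this]; ring

lemma clip_comp (v c : ℝ) (h0 : 0 ≤ c) (h1 : c ≤ 1) :
    (v - min (max v 0) 1) * (c - min (max v 0) 1) ≤ 0 := by
  rcases le_total v 0 with h | h
  · rw [max_eq_right h, min_eq_left zero_le_one]
    simpa using mul_nonpos_of_nonpos_of_nonneg (by linarith) (by linarith)
  · rw [max_eq_left h]
    rcases le_total v 1 with h' | h'
    · rw [min_eq_left h']; simp
    · rw [min_eq_right h']
      exact mul_nonpos_of_nonneg_of_nonpos (by linarith) (by linarith)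

lemma clip_step (c y q : EuclideanSpace ℝ (Fin J))
    (hc : ∀ j, 0 ≤ c j ∧ c j ≤ 1)
    (hq : ∀ j, q j = min (max (y j) 0) 1) :
    ‖q - c‖ ^ 2 + ‖q - y‖ ^ 2 ≤ ‖y - c‖ ^ 2 := by
  have hinner : ⟪y - q, c - q⟫ ≤ 0 := by
    rw [PiLp.inner_apply]
    apply Finset.sum_nonpos
    intro j _
    have := clip_comp (y j) (c j) (hc j).1 (hc j).2
    simpa [hq j, mul_comm] using this
  have hdecomp : y - c = (y - q) + (q - c) := by abel
  have hns : ‖y - c‖ ^ 2 = ‖y - q‖ ^ 2 + 2 * ⟪y - q, q - c⟫ + ‖q - c‖ ^ 2 := by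
    rw [hdecomp, norm_add_sq_real]
  have hflip : ⟪y - q, q - c⟫ = -⟪y - q, c - q⟫ := by
    rw [← inner_neg_right]; congr 1; abel
  have hq' : ‖q - y‖ = ‖y - q‖ := norm_sub_rev _ _
  rw [hq']
  linarith

end ArtAux

/-- convergence of ART with interleaved box projection. If
`C = {x : ⟨aⁱ,x⟩ = b_i for all i, and 0 ≤ x_j ≤ 1 for all j}` is nonempty and
`A_C = Q ∘ U_I ∘ ⋯ ∘ U_1` (Kaczmarz sweeps followed by clipping to `[0,1]`), then for every
`x⁰ ∈ [0,1]^J` the sequence `x^{k+1} = A_C(x^k)` converges to a point `x* ∈ C`. -/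
theorem art_with_box_converges
    (I J : ℕ)
    (a : Fin I → EuclideanSpace ℝ (Fin J)) (ha : ∀ i, a i ≠ 0)
    (b : Fin I → ℝ)
    (hC : ∃ x : EuclideanSpace ℝ (Fin J),
      (∀ i, ⟪a i, x⟫ = b i) ∧ (∀ j, 0 ≤ x j ∧ x j ≤ 1))
    (U : Fin I → EuclideanSpace ℝ (Fin J) → EuclideanSpace ℝ (Fin J))
    (hU : ∀ i x, U i x = x + ((b i - ⟪a i, x⟫) / ‖a i‖ ^ 2) • a i)
    (Q : EuclideanSpace ℝ (Fin J) → EuclideanSpace ℝ (Fin J))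
    (hQ : ∀ (x : EuclideanSpace ℝ (Fin J)) (j : Fin J), Q x j = min (max (x j) 0) 1)
    (AC : EuclideanSpace ℝ (Fin J) → EuclideanSpace ℝ (Fin J))
    (hAC : ∀ x, AC x = Q (Fin.foldl I (fun z i => U i z) x))
    (x0 : EuclideanSpace ℝ (Fin J)) (hx0 : ∀ j, 0 ≤ x0 j ∧ x0 j ≤ 1) :
    ∃ xs : EuclideanSpace ℝ (Fin J),
      (∀ i, ⟪a i, xs⟫ = b i) ∧ (∀ j, 0 ≤ xs j ∧ xs j ≤ 1) ∧
      Filter.Tendsto (fun k => AC^[k] x0) Filter.atTop (nhds xs) := by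
  classical
  obtain ⟨c, hc1, hc2⟩ := hC
  -- partial sweeps
  set p : EuclideanSpace ℝ (Fin J) → ℕ → EuclideanSpace ℝ (Fin J) :=
    fun x n => ArtAux.pgen (fun m y => if h : m < I then U ⟨m, h⟩ y else y) n x with hp
  have hp0 : ∀ x, p x 0 = x := fun _ => rfl
  have hpsucc : ∀ x n, p x (n + 1) =
      (if h : n < I then U ⟨n, h⟩ (p x n) else p x n) := fun _ _ => rfl
  have hfold : ∀ x, Fin.foldl I (fun z i => U i z) x = p x I := by
    intro x
    exact ArtAux.foldl_eq_pgen I (fun z i => U i z) x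
  have hAC' : ∀ x, AC x = Q (p x I) := by intro x; rw [hAC, hfold]
  -- general facts about one sweep relative to any point of C
  have hUmem : ∀ (i : Fin I) y, ⟪a i, U i y⟫ = b i := by
    intro i y; rw [hU]; exact ArtAux.hyper_mem (a i) (ha i) (b i) y
  have hpmem : ∀ x (n : ℕ) (h : n < I), ⟪a ⟨n, h⟩, p x (n + 1)⟫ = b ⟨n, h⟩ := by
    intro x n h
    rw [hpsucc, dif_pos h]
    exact hUmem _ _
  have key : ∀ c' : EuclideanSpace ℝ (Fin J), (∀ i, ⟪a i, c'⟫ = b i) →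
      (∀ j, 0 ≤ c' j ∧ c' j ≤ 1) → ∀ x,
      (∀ n, ‖p x (n + 1) - c'‖ ^ 2 + ‖p x (n + 1) - p x n‖ ^ 2 ≤ ‖p x n - c'‖ ^ 2) := by
    intro c' hc1' hc2' x n
    rw [hpsucc]
    by_cases h : n < I
    · rw [dif_pos h]
      set i : Fin I := ⟨n, h⟩
      have hui : U i (p x n) = p x n + ((b i - ⟪a i, p x n⟫) / ‖a i‖ ^ 2) • a i := hU i _
      set t : ℝ := (b i - ⟪a i, p x n⟫) / ‖a i‖ ^ 2 with ht
      have hmem : ⟪a i, p x n + t • a i⟫ = b i := by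
        rw [← hui]; exact hUmem i _
      have := ArtAux.hyper_step (a i) (b i) t c' (p x n) (hc1' i) hmem
      rw [hui]
      have hdiff : p x n + t • a i - p x n = t • a i := by abel
      rw [hdiff]
      linarith
    · rw [dif_neg h]; simp
  have keymono : ∀ c' : EuclideanSpace ℝ (Fin J), (∀ i, ⟪a i, c'⟫ = b i) →
      (∀ j, 0 ≤ c' j ∧ c' j ≤ 1) → ∀ x n m, n ≤ m →
      ‖p x m - c'‖ ^ 2 ≤ ‖p x n - c'‖ ^ 2 := by
    intro c' h1 h2 x n m hnm
    induction m with
    | zero => simp_all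
    | succ m ih =>
      rcases eq_or_lt_of_le hnm with h | h
      · subst h; exact le_rfl
      · have h1' := key c' h1 h2 x m
        have h2' := ih (Nat.lt_succ_iff.mp h)
        nlinarith [sq_nonneg ‖p x (m+1) - p x m‖]
  have keyQ : ∀ c' : EuclideanSpace ℝ (Fin J),
      (∀ j, 0 ≤ c' j ∧ c' j ≤ 1) → ∀ x,
      ‖AC x - c'‖ ^ 2 + ‖AC x - p x I‖ ^ 2 ≤ ‖p x I - c'‖ ^ 2 := by
    intro c' h2 x
    rw [hAC']
    exact ArtAux.clip_step c' (p x I) (Q (p x I)) h2 (hQ (p x I))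
  have keyAC : ∀ c' : EuclideanSpace ℝ (Fin J), (∀ i, ⟪a i, c'⟫ = b i) →
      (∀ j, 0 ≤ c' j ∧ c' j ≤ 1) → ∀ x,
      ‖AC x - c'‖ ^ 2 ≤ ‖x - c'‖ ^ 2 := by
    intro c' h1 h2 x
    have h3 := keyQ c' h2 x
    have h4 := keymono c' h1 h2 x 0 I (Nat.zero_le I)
    rw [hp0] at h4
    nlinarith [sq_nonneg ‖AC x - p x I‖]
  have keyACnorm : ∀ c' : EuclideanSpace ℝ (Fin J), (∀ i, ⟪a i, c'⟫ = b i) →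
      (∀ j, 0 ≤ c' j ∧ c' j ≤ 1) → ∀ x, ‖AC x - c'‖ ≤ ‖x - c'‖ := by
    intro c' h1 h2 x
    have h := keyAC c' h1 h2 x
    calc ‖AC x - c'‖ = Real.sqrt (‖AC x - c'‖ ^ 2) := (Real.sqrt_sq (norm_nonneg _)).symm
      _ ≤ Real.sqrt (‖x - c'‖ ^ 2) := Real.sqrt_le_sqrt h
      _ = ‖x - c'‖ := Real.sqrt_sq (norm_nonneg _)
  -- step displacement bound
  have keystep : ∀ x n, ‖p x (n + 1) - p x n‖ ≤
      Real.sqrt (‖x - c‖ ^ 2 - ‖AC x - c‖ ^ 2) := by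
    intro x n
    have hb : ‖p x (n + 1) - p x n‖ ^ 2 ≤ ‖x - c‖ ^ 2 - ‖AC x - c‖ ^ 2 := by
      by_cases h : n < I
      · have h1 := key c hc1 hc2 x n
        have h2 := keymono c hc1 hc2 x 0 n (Nat.zero_le n)
        rw [hp0] at h2
        have h3 := keymono c hc1 hc2 x (n + 1) I h
        have h4 := keyQ c hc2 x
        nlinarith [sq_nonneg ‖AC x - p x I‖]
      · rw [hpsucc, dif_neg h]
        have := keyAC c hc1 hc2 x
        simp only [sub_self, norm_zero]
        nlinarith
    calc ‖p x (n + 1) - p x n‖ = Real.sqrt (‖p x (n + 1) - p x n‖ ^ 2) :=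
          (Real.sqrt_sq (norm_nonneg _)).symm
      _ ≤ _ := Real.sqrt_le_sqrt hb
  have keydist : ∀ x n, ‖p x n - x‖ ≤
      n * Real.sqrt (‖x - c‖ ^ 2 - ‖AC x - c‖ ^ 2) := by
    intro x n
    induction n with
    | zero => simp [hp0]
    | succ n ih =>
      have h1 : ‖p x (n + 1) - x‖ ≤ ‖p x (n + 1) - p x n‖ + ‖p x n - x‖ :=
        norm_sub_le_norm_sub_add_norm_sub _ _ _
      have h2 := keystep x n
      push_cast
      nlinarith [Real.sqrt_nonneg (‖x - c‖ ^ 2 - ‖AC x - c‖ ^ 2)]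
  -- the iterate sequence
  set xk : ℕ → EuclideanSpace ℝ (Fin J) := fun k => AC^[k] x0 with hxk
  have hxsucc : ∀ k, xk (k + 1) = AC (xk k) := by
    intro k; simp [hxk, Function.iterate_succ_apply']
  have hbox : ∀ k j, 0 ≤ xk k j ∧ xk k j ≤ 1 := by
    intro k j
    cases k with
    | zero => exact hx0 j
    | succ k =>
      rw [hxsucc, hAC', hQ]
      constructor
      · exact le_min (le_max_right _ _) zero_le_one
      · exact min_le_right _ _
  -- d k = ‖xk k - c‖² is antitone, converges; step gaps → 0
  set d : ℕ → ℝ := fun k => ‖xk k - c‖ ^ 2 with hd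
  have hdanti : Antitone d := by
    apply antitone_nat_of_succ_le
    intro k
    simp only [hd]
    rw [hxsucc]
    exact keyAC c hc1 hc2 (xk k)
  have hdnonneg : ∀ k, 0 ≤ d k := fun k => sq_nonneg _
  have hdbdd : BddBelow (Set.range d) := ⟨0, by rintro _ ⟨k, rfl⟩; exact hdnonneg k⟩
  have hdlim : Filter.Tendsto d Filter.atTop (nhds (⨅ k, d k)) :=
    tendsto_atTop_ciInf hdanti hdbdd
  have hgap : Filter.Tendsto (fun k => d k - d (k + 1)) Filter.atTop (nhds 0) := by
    have h2 : Filter.Tendsto (fun k => d (k + 1)) Filter.atTop (nhds (⨅ k, d k)) :=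
      hdlim.comp (Filter.tendsto_add_atTop_nat 1)
    simpa using hdlim.sub h2
  have hsqrtgap : Filter.Tendsto (fun k => Real.sqrt (d k - d (k + 1)))
      Filter.atTop (nhds 0) := by
    have := (Real.continuous_sqrt.tendsto 0).comp hgap
    simpa [Function.comp_def] using this
  -- bounded, extract convergent subsequence
  have hbdd : ∀ k, xk k ∈ Metric.closedBall c ‖x0 - c‖ := by
    intro k
    rw [Metric.mem_closedBall, dist_eq_norm]
    have : d k ≤ d 0 := hdanti (Nat.zero_le k)
    simp only [hd] at this
    have h0 : xk 0 = x0 := rfl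
    rw [h0] at this
    nlinarith [norm_nonneg (xk k - c), norm_nonneg (x0 - c)]
  obtain ⟨xs, -, φ, hφ, hlim⟩ := tendsto_subseq_of_bounded
    Metric.isBounded_closedBall hbdd
  have hxs1 : ∀ i, ⟪a i, xs⟫ = b i := by
    intro i
    set w : ℕ → EuclideanSpace ℝ (Fin J) := fun m => p (xk (φ m)) ((i : ℕ) + 1) with hw
    have hwmem : ∀ m, ⟪a i, w m⟫ = b i := by
      intro m
      have := hpmem (xk (φ m)) i i.isLt
      simpa [hw, Fin.eta] using this
    have hwdiff : Filter.Tendsto (fun m => w m - xk (φ m)) Filter.atTop (nhds 0) := by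
      rw [tendsto_zero_iff_norm_tendsto_zero]
      have hb : ∀ m, ‖w m - xk (φ m)‖ ≤
          ((i : ℕ) + 1) * Real.sqrt (d (φ m) - d (φ m + 1)) := by
        intro m
        have := keydist (xk (φ m)) ((i : ℕ) + 1)
        have he : ‖xk (φ m) - c‖ ^ 2 - ‖AC (xk (φ m)) - c‖ ^ 2
            = d (φ m) - d (φ m + 1) := by
          simp only [hd]
          rw [hxsucc]
        rw [he] at this
        exact_mod_cast this
      have hlim2 : Filter.Tendsto
          (fun m => ((i : ℕ) + 1) * Real.sqrt (d (φ m) - d (φ m + 1)))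
          Filter.atTop (nhds 0) := by
        have hsub : Filter.Tendsto (fun m => Real.sqrt (d (φ m) - d (φ m + 1)))
            Filter.atTop (nhds 0) := hsqrtgap.comp hφ.tendsto_atTop
        simpa using hsub.const_mul ((i : ℕ) + 1 : ℝ)
      exact squeeze_zero (fun m => norm_nonneg _) hb hlim2
    have hwlim : Filter.Tendsto w Filter.atTop (nhds xs) := by
      have : Filter.Tendsto (fun m => (w m - xk (φ m)) + xk (φ m))
          Filter.atTop (nhds (0 + xs)) := hwdiff.add hlim
      simpa using this
    have hinnerlim : Filter.Tendsto (fun m => ⟪a i, w m⟫) Filter.atTop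
        (nhds ⟪a i, xs⟫) :=
      ((continuous_const.inner continuous_id).tendsto xs).comp hwlim
    have : Filter.Tendsto (fun _ : ℕ => b i) Filter.atTop (nhds ⟪a i, xs⟫) := by
      simpa [hwmem] using hinnerlim
    exact tendsto_nhds_unique this tendsto_const_nhds
  have hxs2 : ∀ j, 0 ≤ xs j ∧ xs j ≤ 1 := by
    intro j
    have hcont : Filter.Tendsto (fun m => xk (φ m) j) Filter.atTop (nhds (xs j)) :=
      ((EuclideanSpace.proj j).continuous.tendsto xs).comp hlim
    constructor
    · exact ge_of_tendsto' hcont (fun m => (hbox (φ m) j).1)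
    · exact le_of_tendsto' hcont (fun m => (hbox (φ m) j).2)
  refine ⟨xs, hxs1, hxs2, ?_⟩
  -- convergence of the whole sequence
  show Filter.Tendsto xk Filter.atTop (nhds xs)
  set e : ℕ → ℝ := fun k => ‖xk k - xs‖ with he
  have heanti : Antitone e := by
    apply antitone_nat_of_succ_le
    intro k
    simp only [he]
    rw [hxsucc]
    exact keyACnorm xs hxs1 hxs2 (xk k)
  have hebdd : BddBelow (Set.range e) := ⟨0, by rintro _ ⟨k, rfl⟩; exact norm_nonneg _⟩
  have helim : Filter.Tendsto e Filter.atTop (nhds (⨅ k, e k)) :=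
    tendsto_atTop_ciInf heanti hebdd
  have hsub0 : Filter.Tendsto (fun m => e (φ m)) Filter.atTop (nhds 0) := by
    have h1 : Filter.Tendsto (fun m => xk (φ m) - xs) Filter.atTop (nhds 0) := by
      simpa using hlim.sub (tendsto_const_nhds : Filter.Tendsto (fun _ : ℕ => xs) Filter.atTop (nhds xs))
    exact tendsto_zero_iff_norm_tendsto_zero.mp h1
  have hsub1 : Filter.Tendsto (fun m => e (φ m)) Filter.atTop (nhds (⨅ k, e k)) :=
    helim.comp hφ.tendsto_atTop
  have hinf0 : (⨅ k, e k) = 0 := tendsto_nhds_unique hsub1 hsub0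
  rw [hinf0] at helim
  have : Filter.Tendsto (fun k => xk k - xs) Filter.atTop (nhds 0) :=
    tendsto_zero_iff_norm_tendsto_zero.mpr helim
  have h2 : Filter.Tendsto (fun k => (xk k - xs) + xs) Filter.atTop (nhds (0 + xs)) :=
    this.add tendsto_const_nhds
  simpa using h2
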